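/- If frequencies f_1, …, f_s are drawn independently and uniformly at random from [0,1], then with probability 1 the 3s×3s matrix A_s with entries given rowwise by (l_k^i · e^{i2π f_j l_k}) for j = 1,…,s, i = 0,1,2, k = 0,…,3s−1, is invertible (the pairwise distinct sample indices l_0,…,l_{3s−1} being fixed). -/

import Mathlib

open Matrix MeasureTheory Real Polynomial

noncomputable def Amat (s : ℕ) (l : Fin (3 * s) → ℕ) (f : Fin s → ℝ) :
    Matrix (Fin (3 * s)) (Fin (3 * s)) ℂ :=
  Matrix.of fun (r k : Fin (3 * s)) =>
    ((l k : ℂ)) ^ ((r : ℕ) % 3) *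
      Complex.exp (2 * π * Complex.I * (f ⟨(r : ℕ) / 3, Nat.div_lt_of_lt_mul r.isLt⟩) * (l k : ℂ))

lemma exp_fiber_countable (z : ℂ) :
    Set.Countable {x : ℝ | Complex.exp (2 * π * Complex.I * x) = z} := by
  rcases Set.eq_empty_or_nonempty {x : ℝ | Complex.exp (2 * π * Complex.I * x) = z} with
    h | ⟨x0, hx0⟩
  · simp [h]
  · have hsub : {x : ℝ | Complex.exp (2 * π * Complex.I * x) = z} ⊆
        Set.range (fun n : ℤ => x0 + n) := by
      intro x hx
      have h1 : Complex.exp (2 * π * Complex.I * x) = Complex.exp (2 * π * Complex.I * x0) := by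
        rw [hx, hx0]
      rw [Complex.exp_eq_exp_iff_exists_int] at h1
      obtain ⟨n, hn⟩ := h1
      have h2 : (2 * (π : ℂ) * Complex.I) * (x : ℂ) = (2 * (π : ℂ) * Complex.I) * ((x0 : ℂ) + n) := by
        rw [hn]; ring
      have hne : (2 * (π : ℂ) * Complex.I) ≠ 0 := by
        simp [Real.pi_ne_zero, Complex.I_ne_zero, Complex.ofReal_ne_zero]
      have h3 : (x : ℂ) = (x0 : ℂ) + n := mul_left_cancel₀ hne h2
      have h4 : x = x0 + (n : ℝ) := by exact_mod_cast h3
      exact ⟨n, h4.symm⟩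
    exact (Set.countable_range _).mono hsub

lemma null_exp_root (Q : Polynomial ℂ) (hQ : Q ≠ 0) :
    volume {x : ℝ | Q.eval (Complex.exp (2 * π * Complex.I * x)) = 0} = 0 := by
  have hZ : Set.Finite {z : ℂ | Q.IsRoot z} := Polynomial.finite_setOf_isRoot hQ
  have hsub : {x : ℝ | Q.eval (Complex.exp (2 * π * Complex.I * x)) = 0} ⊆
      ⋃ z ∈ {z : ℂ | Q.IsRoot z}, {x : ℝ | Complex.exp (2 * π * Complex.I * x) = z} := by
    intro x hx
    exact Set.mem_biUnion hx rfl
  refine measure_mono_null hsub ?_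
  refine (measure_biUnion_null_iff hZ.countable).2 fun z _ => ?_
  exact ((exp_fiber_countable z).measure_zero _)

section
variable (s : ℕ) (l : Fin (3 * (s + 1)) → ℕ)

noncomputable def lowE (g : Fin s → ℝ) (r k : Fin (3 * (s + 1))) : ℂ :=
  if h : (r : ℕ) / 3 < s then
    ((l k : ℂ)) ^ ((r : ℕ) % 3) *
      Complex.exp (2 * π * Complex.I * (g ⟨(r : ℕ) / 3, h⟩) * (l k : ℂ))
  else 0

noncomputable def Mp (g : Fin s → ℝ) :
    Matrix (Fin (3 * (s + 1))) (Fin (3 * (s + 1))) (Polynomial ℂ) :=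
  Matrix.of fun r k =>
    if (r : ℕ) / 3 = s then C (((l k : ℂ)) ^ ((r : ℕ) % 3)) * X ^ (l k)
    else C (lowE s l g r k)

noncomputable def Bc (g : Fin s → ℝ) :
    Matrix (Fin (3 * (s + 1))) (Fin (3 * (s + 1))) ℂ :=
  Matrix.of fun r k =>
    if (r : ℕ) / 3 = s then
      (if 3 * s ≤ (k : ℕ) then ((l k : ℂ)) ^ ((r : ℕ) % 3) else 0)
    else lowE s l g r k

def kN : Fin (3 * (s + 1)) := ⟨3 * s, by omega⟩
def kN1 : Fin (3 * (s + 1)) := ⟨3 * s + 1, by omega⟩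
def kN2 : Fin (3 * (s + 1)) := ⟨3 * s + 2, by omega⟩

def top3 : Finset (Fin (3 * (s + 1))) := {kN s, kN1 s, kN2 s}

lemma mem_top3 (i : Fin (3 * (s + 1))) : i ∈ top3 s ↔ 3 * s ≤ (i : ℕ) := by
  have := i.isLt
  simp only [top3, Finset.mem_insert, Finset.mem_singleton, Fin.ext_iff, kN, kN1, kN2]
  omega

lemma card_top3 : (top3 s).card = 3 := by
  rw [top3, Finset.card_insert_of_notMem (by simp [Fin.ext_iff, kN, kN1, kN2]),
    Finset.card_insert_of_notMem (by simp [Fin.ext_iff, kN1, kN2]),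
    Finset.card_singleton]

variable {s l}

lemma tri (hl : StrictMono l) {a b c : Fin (3 * (s + 1))} (hab : a < b) (hbc : b < c)
    (hsum : l a + l b + l c = l (kN s) + l (kN1 s) + l (kN2 s)) :
    a = kN s ∧ b = kN1 s ∧ c = kN2 s := by
  have hc2 : c ≤ kN2 s := by
    have := c.isLt
    simp only [Fin.le_def, kN2]; omega
  have hb1 : b ≤ kN1 s := by
    have h := Fin.lt_def.mp hbc
    have := c.isLt
    simp only [Fin.le_def, kN1]; omega
  have ha0 : a ≤ kN s := by
    have h := Fin.lt_def.mp hab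
    have h' := Fin.lt_def.mp hbc
    have := c.isLt
    simp only [Fin.le_def, kN]; omega
  have e1 : l a ≤ l (kN s) := hl.monotone ha0
  have e2 : l b ≤ l (kN1 s) := hl.monotone hb1
  have e3 : l c ≤ l (kN2 s) := hl.monotone hc2
  have heq : l a = l (kN s) ∧ l b = l (kN1 s) ∧ l c = l (kN2 s) := by omega
  exact ⟨hl.injective heq.1, hl.injective heq.2.1, hl.injective heq.2.2⟩

lemma sum3 (hl : StrictMono l) {T : Finset (Fin (3 * (s + 1)))} (hcard : T.card = 3)
    (hsum : ∑ i ∈ T, l i = l (kN s) + l (kN1 s) + l (kN2 s)) : T = top3 s := by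
  obtain ⟨a, b, c, hab, hac, hbc, rfl⟩ := Finset.card_eq_three.mp hcard
  rw [Finset.sum_insert (by simp [hab, hac]), Finset.sum_pair hbc] at hsum
  have goal_eq : ∀ u v w : Fin (3 * (s + 1)),
      u = kN s → v = kN1 s → w = kN2 s → ({u, v, w} : Finset _) = top3 s ∧
      ({v, u, w} : Finset _) = top3 s ∧ ({v, w, u} : Finset _) = top3 s ∧
      ({u, w, v} : Finset _) = top3 s ∧ ({w, u, v} : Finset _) = top3 s ∧
      ({w, v, u} : Finset _) = top3 s := by
    rintro u v w rfl rfl rfl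
    refine ⟨rfl, ?_, ?_, ?_, ?_, ?_⟩ <;> · rw [top3]; ext x; simp; tauto
  rcases hab.lt_or_gt with h1 | h1 <;> rcases hbc.lt_or_gt with h2 | h2 <;>
    rcases hac.lt_or_gt with h3 | h3
  · obtain ⟨e1, e2, e3⟩ := tri hl h1 h2 (by omega); exact (goal_eq a b c e1 e2 e3).1
  · exact absurd (h1.trans h2) h3.asymm
  · obtain ⟨e1, e2, e3⟩ := tri hl h3 h2 (by omega); exact (goal_eq a c b e1 e2 e3).2.2.2.1
  · obtain ⟨e1, e2, e3⟩ := tri hl h3 h1 (by omega); exact (goal_eq c a b e1 e2 e3).2.2.1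
  · obtain ⟨e1, e2, e3⟩ := tri hl h1 h3 (by omega); exact (goal_eq b a c e1 e2 e3).2.1
  · obtain ⟨e1, e2, e3⟩ := tri hl h2 h3 (by omega); exact (goal_eq b c a e1 e2 e3).2.2.2.2.1
  · exact absurd (h2.trans h1) h3.asymm
  · obtain ⟨e1, e2, e3⟩ := tri hl h2 h1 (by omega); exact (goal_eq c b a e1 e2 e3).2.2.2.2.2

lemma sum_top3 : ∑ i ∈ top3 s, l i = l (kN s) + l (kN1 s) + l (kN2 s) := by
  rw [top3, Finset.sum_insert (by simp [Fin.ext_iff, kN, kN1, kN2]),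
    Finset.sum_pair (by simp [Fin.ext_iff, kN1, kN2])]
  ring

lemma coeff_detMp (hl : StrictMono l) (g : Fin s → ℝ) :
    ((Mp s l g).det).coeff (l (kN s) + l (kN1 s) + l (kN2 s)) = (Bc s l g).det := by
  rw [Matrix.det_apply' (Mp s l g), Matrix.det_apply' (Bc s l g), Polynomial.finset_sum_coeff]
  refine Finset.sum_congr rfl fun σ _ => ?_
  have hMentry : ∀ i, (Mp s l g) (σ i) i =
      C (if ((σ i : ℕ)) / 3 = s then ((l i : ℂ)) ^ ((σ i : ℕ) % 3) else lowE s l g (σ i) i) *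
        X ^ (if ((σ i : ℕ)) / 3 = s then l i else 0) := by
    intro i
    simp only [Mp, Matrix.of_apply]
    split_ifs with h <;> simp
  simp_rw [hMentry]
  rw [Finset.prod_mul_distrib, ← map_prod, Finset.prod_pow_eq_pow_sum]
  set T := Finset.univ.filter (fun i => ((σ i : ℕ)) / 3 = s) with hTdef
  have hTeq : T = (top3 s).map σ.symm.toEmbedding := by
    ext i
    simp only [hTdef, Finset.mem_filter, Finset.mem_univ, true_and, Finset.mem_map_equiv,
      Equiv.symm_symm, mem_top3]
    have := (σ i).isLt
    omega
  have hTcard : T.card = 3 := by rw [hTeq, Finset.card_map, card_top3]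
  have hE : (∑ i, if ((σ i : ℕ)) / 3 = s then l i else 0) = ∑ i ∈ T, l i :=
    (Finset.sum_filter _ _).symm
  rw [← Polynomial.C_eq_intCast, Polynomial.coeff_C_mul, Polynomial.coeff_C_mul,
    Polynomial.coeff_X_pow, hE]
  by_cases hTT : T = top3 s
  · have hED : ∑ i ∈ T, l i = l (kN s) + l (kN1 s) + l (kN2 s) := by rw [hTT]; exact sum_top3
    rw [if_pos hED.symm, mul_one]
    congr 1
    refine Finset.prod_congr rfl fun i _ => ?_
    simp only [Bc, Matrix.of_apply]
    by_cases h : ((σ i : ℕ)) / 3 = s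
    · have hi : i ∈ T := by simp [hTdef, h]
      rw [hTT, mem_top3] at hi
      rw [if_pos h, if_pos h, if_pos hi]
    · rw [if_neg h, if_neg h]
  · have hED : ¬ (l (kN s) + l (kN1 s) + l (kN2 s) = ∑ i ∈ T, l i) :=
      fun h => hTT (sum3 hl hTcard h.symm)
    rw [if_neg hED, mul_zero, mul_zero]
    have hsub : ¬ T ⊆ top3 s := fun hsub =>
      hTT (Finset.eq_of_subset_of_card_le hsub (by rw [hTcard, card_top3]))
    obtain ⟨i, hiT, hitop⟩ := Finset.not_subset.mp hsub
    have hzero : (Bc s l g) (σ i) i = 0 := by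
      simp only [Bc, Matrix.of_apply]
      rw [if_pos (by simpa [hTdef] using hiT), if_neg (by rw [← mem_top3]; exact hitop)]
    rw [show (∏ x, Bc s l g (σ x) x) = 0 from Finset.prod_eq_zero (Finset.mem_univ i) hzero,
      mul_zero]

lemma detBc_ne (hl : StrictMono l) (g : Fin s → ℝ)
    (hg : (Amat s (fun k => l (Fin.castLE (by omega) k)) g).det ≠ 0) :
    (Bc s l g).det ≠ 0 := by
  let e : Fin (3 * s) ⊕ Fin 3 ≃ Fin (3 * (s + 1)) :=
    finSumFinEquiv.trans (finCongr (by omega))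
  have hinl : ∀ j : Fin (3 * s), (e (Sum.inl j) : ℕ) = (j : ℕ) := fun j => by
    simp only [e, Equiv.trans_apply, finCongr_apply, Fin.coe_cast]
    rw [finSumFinEquiv_apply_left]; simp
  have hinr : ∀ j : Fin 3, (e (Sum.inr j) : ℕ) = 3 * s + (j : ℕ) := fun j => by
    simp only [e, Equiv.trans_apply, finCongr_apply, Fin.coe_cast]
    rw [finSumFinEquiv_apply_right]; simp
  rw [← Matrix.det_submatrix_equiv_self e (Bc s l g)]
  have hblocks : (Bc s l g).submatrix e e =
      Matrix.fromBlocks (Amat s (fun k => l (Fin.castLE (by omega) k)) g)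
        ((Bc s l g).submatrix (e ∘ Sum.inl) (e ∘ Sum.inr)) 0
        (Matrix.of fun i j : Fin 3 => ((l (e (Sum.inr j)) : ℂ)) ^ (i : ℕ)) := by
    ext i j
    rcases i with i | i <;> rcases j with j | j
    · simp only [Matrix.submatrix_apply, Matrix.fromBlocks_apply₁₁, Bc, Matrix.of_apply, Amat]
      rw [if_neg (by rw [hinl]; have := i.isLt; omega), lowE,
        dif_pos (show ((e (Sum.inl i) : ℕ)) / 3 < s by rw [hinl]; have := i.isLt; omega)]
      have hj' : e (Sum.inl j) = Fin.castLE (by omega) j := Fin.ext (hinl j)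
      rw [hj']
      simp only [hinl]
    · rfl
    · simp only [Matrix.submatrix_apply, Matrix.fromBlocks_apply₂₁, Bc, Matrix.of_apply,
        Matrix.zero_apply]
      rw [if_pos (by rw [hinr]; omega), if_neg (by rw [hinl]; have := j.isLt; omega)]
    · simp only [Matrix.submatrix_apply, Matrix.fromBlocks_apply₂₂, Bc, Matrix.of_apply]
      rw [if_pos (by rw [hinr]; omega), if_pos (by rw [hinr]; omega)]
      congr 1
      rw [hinr]
      have := i.isLt
      omega
  rw [hblocks, Matrix.det_fromBlocks_zero₂₁]
  refine mul_ne_zero hg ?_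
  have hV : (Matrix.of fun i j : Fin 3 => ((l (e (Sum.inr j)) : ℂ)) ^ (i : ℕ)) =
      (Matrix.vandermonde fun j : Fin 3 => (l (e (Sum.inr j)) : ℂ))ᵀ := by
    ext i j
    simp [Matrix.vandermonde, Matrix.transpose_apply]
  rw [hV, Matrix.det_transpose, Matrix.det_vandermonde]
  refine Finset.prod_ne_zero_iff.mpr fun i _ => Finset.prod_ne_zero_iff.mpr fun j hj => ?_
  rw [sub_ne_zero]
  have hij : i < j := Finset.mem_Ioi.mp hj
  have hlt : l (e (Sum.inr i)) < l (e (Sum.inr j)) := by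
    refine hl ?_
    rw [Fin.lt_def, hinr, hinr]
    have := Fin.lt_def.mp hij
    omega
  exact_mod_cast hlt.ne'

lemma eval_Mp (g : Fin s → ℝ) (x : ℝ) :
    ((Mp s l g).det).eval (Complex.exp (2 * π * Complex.I * x)) =
      (Amat (s + 1) l (Fin.insertNth (α := fun _ => ℝ) (Fin.last s) x g)).det := by
  have h1 : ∀ (j : Fin (s + 1)), (j : ℕ) = s →
      Fin.insertNth (α := fun _ => ℝ) (Fin.last s) x g j = x := by
    intro j hj
    have : j = Fin.last s := Fin.ext (by simpa [Fin.last] using hj)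
    subst this
    simp
  have h2 : ∀ (j : Fin (s + 1)) (h : (j : ℕ) < s),
      Fin.insertNth (α := fun _ => ℝ) (Fin.last s) x g j = g ⟨(j : ℕ), h⟩ := by
    intro j h
    have : j = (Fin.last s).succAbove ⟨(j : ℕ), h⟩ := by
      rw [Fin.succAbove_last]; exact Fin.ext rfl
    conv_lhs => rw [this]
    rw [Fin.insertNth_apply_succAbove]
  have : ((Mp s l g).map (Polynomial.evalRingHom (Complex.exp (2 * π * Complex.I * x)))) =
      Amat (s + 1) l (Fin.insertNth (α := fun _ => ℝ) (Fin.last s) x g) := by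
    ext r k
    simp only [Matrix.map_apply, Matrix.of_apply, Mp, Amat, coe_evalRingHom]
    by_cases h : (r : ℕ) / 3 = s
    · rw [if_pos h]
      have hf : Fin.insertNth (α := fun _ => ℝ) (Fin.last s) x g
          ⟨(r : ℕ) / 3, by have := r.isLt; omega⟩ = x := h1 _ h
      rw [hf]
      simp only [eval_mul, eval_pow, eval_C, eval_X]
      rw [← Complex.exp_nat_mul]
      congr 2
      ring
    · rw [if_neg h]
      have h' : (r : ℕ) / 3 < s := by have := r.isLt; omega
      have hf : Fin.insertNth (α := fun _ => ℝ) (Fin.last s) x g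
          ⟨(r : ℕ) / 3, by have := r.isLt; omega⟩ = g ⟨(r : ℕ) / 3, h'⟩ := h2 _ h'
      rw [hf, eval_C, lowE, dif_pos h']
  rw [show ((Mp s l g).det).eval (Complex.exp (2 * π * Complex.I * x)) =
      (Polynomial.evalRingHom (Complex.exp (2 * π * Complex.I * x))) (Mp s l g).det from rfl,
    RingHom.map_det, RingHom.mapMatrix_apply, this]

lemma key (hl : StrictMono l) (g : Fin s → ℝ)
    (hg : (Amat s (fun k => l (Fin.castLE (by omega) k)) g).det ≠ 0) :
    volume {x : ℝ |
      (Amat (s + 1) l (Fin.insertNth (α := fun _ => ℝ) (Fin.last s) x g)).det = 0} = 0 := by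
  have hQ : (Mp s l g).det ≠ 0 := by
    intro h
    have hc := coeff_detMp hl g
    rw [h] at hc
    simp only [Polynomial.coeff_zero] at hc
    exact (detBc_ne hl g hg) hc.symm
  have hset : {x : ℝ |
      (Amat (s + 1) l (Fin.insertNth (α := fun _ => ℝ) (Fin.last s) x g)).det = 0} =
      {x : ℝ | ((Mp s l g).det).eval (Complex.exp (2 * π * Complex.I * x)) = 0} := by
    ext x
    rw [Set.mem_setOf_eq, Set.mem_setOf_eq, eval_Mp]
  rw [hset]
  exact null_exp_root _ hQ

end

lemma measurable_detset (s : ℕ) (l : Fin (3 * s) → ℕ) :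
    MeasurableSet {f : Fin s → ℝ | (Amat s l f).det = 0} := by
  have hcont : Continuous fun f : Fin s → ℝ => (Amat s l f).det := by
    apply Continuous.matrix_det
    apply continuous_matrix
    intro r k
    simp only [Amat, Matrix.of_apply]
    have h1 : Continuous fun f : Fin s → ℝ =>
        ((f ⟨(r : ℕ) / 3, by have := r.isLt; omega⟩ : ℝ) : ℂ) :=
      Complex.continuous_ofReal.comp (continuous_apply _)
    exact continuous_const.mul
      (Complex.continuous_exp.comp ((continuous_const.mul h1).mul continuous_const))
  exact hcont.measurable (measurableSet_singleton 0)

lemma aux : ∀ (s : ℕ) (l : Fin (3 * s) → ℕ), StrictMono l →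
    ∀ᵐ f : Fin s → ℝ, (Amat s l f).det ≠ 0 := by
  intro s
  induction s with
  | zero =>
    intro l hl
    refine Filter.Eventually.of_forall fun f => ?_
    haveI : IsEmpty (Fin (3 * 0)) := ⟨fun i => by have := i.isLt; omega⟩
    rw [Matrix.det_isEmpty]
    exact one_ne_zero
  | succ n ih =>
    intro l hl
    rw [MeasureTheory.ae_iff]
    simp only [ne_eq, not_not]
    set S := {f : Fin (n + 1) → ℝ | (Amat (n + 1) l f).det = 0} with hSdef
    have hS : MeasurableSet S := measurable_detset (n + 1) l
    set e := MeasurableEquiv.piFinSuccAbove (fun _ : Fin (n + 1) => ℝ) (Fin.last n) with hedef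
    have hmp : MeasurePreserving e volume volume :=
      volume_preserving_piFinSuccAbove (fun _ : Fin (n + 1) => ℝ) (Fin.last n)
    have h1 : volume S = volume (e.symm ⁻¹' S) :=
      ((hmp.symm e).measure_preimage hS.nullMeasurableSet).symm
    have hT : MeasurableSet (e.symm ⁻¹' S) := hS.preimage e.symm.measurable
    rw [h1, show (volume : Measure (ℝ × (Fin n → ℝ))) = (volume : Measure ℝ).prod volume from rfl,
      Measure.prod_apply_symm hT]
    have hslice : ∀ g : Fin n → ℝ, ((fun x : ℝ => (x, g)) ⁻¹' (e.symm ⁻¹' S)) =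
        {x : ℝ | (Amat (n + 1) l (Fin.insertNth (α := fun _ => ℝ) (Fin.last n) x g)).det = 0} := by
      intro g
      ext x
      simp only [Set.mem_preimage, hSdef, Set.mem_setOf_eq, hedef,
        MeasurableEquiv.piFinSuccAbove_symm_apply]
      rfl
    have hl' : StrictMono (fun k : Fin (3 * n) => l (Fin.castLE (by omega) k)) := by
      intro a b h
      exact hl (by rw [Fin.lt_def]; simpa using Fin.lt_def.mp h)
    have hae := ih (fun k => l (Fin.castLE (by omega) k)) hl'
    have hzero : (fun g : Fin n → ℝ =>
        volume ((fun x : ℝ => (x, g)) ⁻¹' (e.symm ⁻¹' S))) =ᵐ[volume] 0 := by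
      refine hae.mono fun g hg => ?_
      simp only [Pi.zero_apply]
      rw [hslice g]
      exact key hl g hg
    rw [lintegral_congr_ae hzero]
    simp

theorem stmt_3 (s : ℕ) (hs : 1 ≤ s) (l : Fin (3 * s) → ℕ) (hl : StrictMono l) :
    volume {f : Fin s → ℝ | (∀ j, f j ∈ Set.Icc (0 : ℝ) 1) ∧
      ¬ IsUnit (Matrix.of fun (r k : Fin (3 * s)) =>
          ((l k : ℂ)) ^ ((r : ℕ) % 3) *
            Complex.exp (2 * π * Complex.I * (f ⟨(r : ℕ) / 3, by have := r.isLt; omega⟩) *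
              (l k : ℂ)))} = 0 := by
  have h := aux s l hl
  rw [MeasureTheory.ae_iff] at h
  simp only [ne_eq, not_not] at h
  refine measure_mono_null ?_ h
  rintro f ⟨-, hf⟩
  simp only [Set.mem_setOf_eq]
  by_contra hdet
  exact hf ((Matrix.isUnit_iff_isUnit_det _).mpr (isUnit_iff_ne_zero.mpr hdet))
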